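/- Let V be a real inner product space, let A₁, …, A_r ∈ V be pairwise orthogonal vectors of common norm α > 0, and let X = Σᵢ xᵢ Aᵢ be a unit vector. Then for every nonzero integer vector (m₁, …, m_r) ∈ ℤʳ with ⟨X, Σᵢ mᵢ Aᵢ⟩ ≠ 0, one has ⟨Σᵢ mᵢAᵢ, Σᵢ mᵢAᵢ⟩ / (2 |⟨X, Σᵢ mᵢAᵢ⟩|) ≥ 1/(2 maxᵢ |xᵢ|), and this bound is attained for some such integer vector; hence the minimum of ⟨A, A⟩ / (2|⟨X, A⟩|) over nonzero lattice vectors A = Σᵢ mᵢAᵢ (mᵢ ∈ ℤ) with ⟨X, A⟩ ≠ 0 equals 1/(2 maxᵢ |xᵢ|). -/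

import Mathlib

noncomputable section

lemma inner_sum_sum' {V : Type*} [NormedAddCommGroup V] [InnerProductSpace ℝ V]
    {r : ℕ} (A : Fin r → V) (α : ℝ)
    (horth : ∀ i j, i ≠ j → (inner ℝ (A i) (A j) : ℝ) = 0)
    (hnorm : ∀ i, ‖A i‖ = α) (a b : Fin r → ℝ) :
    (inner ℝ (∑ i, a i • A i) (∑ i, b i • A i) : ℝ) = α ^ 2 * ∑ i, a i * b i := by
  rw [inner_sum]
  simp_rw [sum_inner, real_inner_smul_left, real_inner_smul_right]
  rw [Finset.mul_sum]
  refine Finset.sum_congr rfl fun j _ => ?_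
  rw [Finset.sum_eq_single j]
  · rw [real_inner_self_eq_norm_sq, hnorm j]; ring
  · intro i _ hij; rw [horth i j hij]; ring
  · simp

/-- In a real inner product space, given pairwise orthogonal vectors `A₁,…,A_r` of common
norm `α > 0` and a unit vector `X = Σᵢ xᵢ Aᵢ`, the quantity `⟨A,A⟩/(2|⟨X,A⟩|)` over nonzero
lattice vectors `A = Σᵢ mᵢ Aᵢ` with `⟨X,A⟩ ≠ 0` is bounded below by `1/(2 maxᵢ |xᵢ|)`, and
the bound is attained. -/
theorem stmt11 {V : Type*} [NormedAddCommGroup V] [InnerProductSpace ℝ V]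
    (r : ℕ) (hr : 0 < r) (A : Fin r → V) (α : ℝ) (hα : 0 < α)
    (horth : ∀ i j, i ≠ j → (inner ℝ (A i) (A j) : ℝ) = 0)
    (hnorm : ∀ i, ‖A i‖ = α)
    (x : Fin r → ℝ) (hX : ‖∑ i, x i • A i‖ = 1) :
    (∀ c : Fin r → ℤ, c ≠ 0 →
      (inner ℝ (∑ i, x i • A i) (∑ i, (c i : ℝ) • A i) : ℝ) ≠ 0 →
      (inner ℝ (∑ i, (c i : ℝ) • A i) (∑ i, (c i : ℝ) • A i) : ℝ) /
          (2 * |(inner ℝ (∑ i, x i • A i) (∑ i, (c i : ℝ) • A i) : ℝ)|) ≥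
        1 / (2 * Finset.univ.sup' ⟨⟨0, hr⟩, Finset.mem_univ _⟩ fun i => |x i|)) ∧
    (∃ c : Fin r → ℤ, c ≠ 0 ∧
      (inner ℝ (∑ i, x i • A i) (∑ i, (c i : ℝ) • A i) : ℝ) ≠ 0 ∧
      (inner ℝ (∑ i, (c i : ℝ) • A i) (∑ i, (c i : ℝ) • A i) : ℝ) /
          (2 * |(inner ℝ (∑ i, x i • A i) (∑ i, (c i : ℝ) • A i) : ℝ)|) =
        1 / (2 * Finset.univ.sup' ⟨⟨0, hr⟩, Finset.mem_univ _⟩ fun i => |x i|)) := by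
  set M : ℝ := Finset.univ.sup' ⟨⟨0, hr⟩, Finset.mem_univ _⟩ fun i => |x i| with hM
  have hα2 : (0:ℝ) < α ^ 2 := by positivity
  -- unit norm gives α² Σ xᵢ² = 1
  have hunit : α ^ 2 * ∑ i, x i * x i = 1 := by
    rw [← inner_sum_sum' A α horth hnorm x x, real_inner_self_eq_norm_sq, hX]; norm_num
  -- M > 0
  have hMpos : 0 < M := by
    by_contra h
    push_neg at h
    have hx0 : ∀ i, x i = 0 := by
      intro i
      have h1 : |x i| ≤ M := Finset.le_sup' (fun j => |x j|) (Finset.mem_univ i)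
      have := abs_nonneg (x i)
      have : |x i| = 0 := le_antisymm (h1.trans h) this
      exact abs_eq_zero.mp this
    simp [hx0] at hunit
  constructor
  · intro c hc hne
    rw [inner_sum_sum' A α horth hnorm x (fun i => (c i : ℝ)),
        inner_sum_sum' A α horth hnorm (fun i => (c i : ℝ)) (fun i => (c i : ℝ))] at *
    set S : ℝ := ∑ i, x i * (c i : ℝ) with hS
    set Q : ℝ := ∑ i, (c i : ℝ) * (c i : ℝ) with hQ
    have hSne : S ≠ 0 := by
      intro h; apply hne; rw [h]; ring
    have hSpos : 0 < |S| := abs_pos.mpr hSne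
    -- key inequality |S| ≤ M * Q
    have hkey : |S| ≤ M * Q := by
      calc |S| ≤ ∑ i, |x i * (c i : ℝ)| := Finset.abs_sum_le_sum_abs _ _
        _ ≤ ∑ i, M * ((c i : ℝ) * (c i : ℝ)) := by
            refine Finset.sum_le_sum fun i _ => ?_
            rw [abs_mul]
            have h1 : |x i| ≤ M := Finset.le_sup' (fun j => |x j|) (Finset.mem_univ i)
            have h2 : |(c i : ℝ)| ≤ (c i : ℝ) * (c i : ℝ) := by
              rcases eq_or_ne (c i) 0 with h | h
              · simp [h]
              · have : (1:ℤ) ≤ |c i| := Int.one_le_abs h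
                have h3 : (1:ℝ) ≤ |(c i : ℝ)| := by
                  rw [← Int.cast_abs]; exact_mod_cast this
                nlinarith [abs_nonneg ((c i : ℝ)), sq_abs ((c i : ℝ))]
            have := abs_nonneg (x i)
            nlinarith [abs_nonneg ((c i : ℝ))]
        _ = M * Q := by rw [← Finset.mul_sum]
    have habs : |α ^ 2 * S| = α ^ 2 * |S| := by
      rw [abs_mul, abs_of_pos hα2]
    rw [habs, ge_iff_le, div_le_div_iff₀ (by positivity) (by positivity)]
    nlinarith [mul_le_mul_of_nonneg_left hkey (le_of_lt hα2)]
  · obtain ⟨i₀, _, hi₀⟩ := Finset.exists_mem_eq_sup' (⟨⟨0, hr⟩, Finset.mem_univ _⟩ :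
      (Finset.univ : Finset (Fin r)).Nonempty) fun i => |x i|
    have hxi : |x i₀| = M := hi₀.symm
    have hxne : x i₀ ≠ 0 := by
      intro h; rw [h, abs_zero] at hxi; exact hMpos.ne' hxi.symm
    refine ⟨(Pi.single i₀ (1:ℤ) : Fin r → ℤ), ?_, ?_, ?_⟩
    · intro h
      have := congrFun h i₀
      simp at this
    · rw [inner_sum_sum' A α horth hnorm x (fun i => (((Pi.single i₀ (1:ℤ) : Fin r → ℤ) i : ℤ) : ℝ))]
      have hsum : ∑ i, x i * (((Pi.single i₀ (1:ℤ) : Fin r → ℤ) i : ℤ) : ℝ) = x i₀ := by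
        rw [Finset.sum_eq_single i₀]
        · simp
        · intro i _ hne; simp [Pi.single_eq_of_ne hne]
        · simp
      rw [hsum]
      exact mul_ne_zero hα2.ne' hxne
    · rw [inner_sum_sum' A α horth hnorm x (fun i => (((Pi.single i₀ (1:ℤ) : Fin r → ℤ) i : ℤ) : ℝ)),
          inner_sum_sum' A α horth hnorm (fun i => (((Pi.single i₀ (1:ℤ) : Fin r → ℤ) i : ℤ) : ℝ))
            (fun i => (((Pi.single i₀ (1:ℤ) : Fin r → ℤ) i : ℤ) : ℝ))]
      have hsum : ∑ i, x i * (((Pi.single i₀ (1:ℤ) : Fin r → ℤ) i : ℤ) : ℝ) = x i₀ := by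
        rw [Finset.sum_eq_single i₀]
        · simp
        · intro i _ hne; simp [Pi.single_eq_of_ne hne]
        · simp
      have hsum2 : ∑ i, (((Pi.single i₀ (1:ℤ) : Fin r → ℤ) i : ℤ) : ℝ) * (((Pi.single i₀ (1:ℤ) : Fin r → ℤ) i : ℤ) : ℝ) = 1 := by
        rw [Finset.sum_eq_single i₀]
        · simp
        · intro i _ hne; simp [Pi.single_eq_of_ne hne]
        · simp
      rw [hsum, hsum2, abs_mul, abs_of_pos hα2, hxi]
      rw [mul_one]
      field_simp
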